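/- Let Ω be an oligomorphic permutation group on a set G, let η be an Ω-invariant equivalence relation on G, and let H be a class of η. Define Ω|_H = {f|_H : f ∈ Ω, f(H) = H}, a group of permutations of H. Then for every k ≥ 1, the orbits of Ω|_H on H^k are exactly the nonempty sets of the form O ∩ H^k where O is an orbit of Ω on G^k; consequently Ω|_H is oligomorphic. -/

import Mathlib

/-- A permutation group is oligomorphic if for each `m` it has only finitely many
orbits on `m`-tuples. -/
def IsOligomorphic {G : Type*} (Ω : Subgroup (Equiv.Perm G)) : Prop :=
  ∀ m : ℕ, {O : Set (Fin m → G) | ∃ x : Fin m → G, O = {y | ∃ f ∈ Ω, y = ⇑f ∘ x}}.Finite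

theorem restriction_orbits {G : Type*} (Ω : Subgroup (Equiv.Perm G))
    (holig : IsOligomorphic Ω) (η : G → G → Prop) (hEq : Equivalence η)
    (hinv : ∀ f ∈ Ω, ∀ a b : G, η a b → η (f a) (f b))
    (H : Set G) (hclass : ∃ a : G, H = {b | η a b}) :
    ∀ k : ℕ, 1 ≤ k →
      ({S : Set (Fin k → G) | ∃ x : Fin k → G, (∀ i, x i ∈ H) ∧
          S = {y | ∃ f ∈ Ω, ⇑f '' H = H ∧ y = ⇑f ∘ x}}
        = {S : Set (Fin k → G) | S.Nonempty ∧ ∃ x : Fin k → G,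
            S = {y | ∃ f ∈ Ω, y = ⇑f ∘ x} ∩ {y | ∀ i, y i ∈ H}})
      ∧ {S : Set (Fin k → G) | ∃ x : Fin k → G, (∀ i, x i ∈ H) ∧
          S = {y | ∃ f ∈ Ω, ⇑f '' H = H ∧ y = ⇑f ∘ x}}.Finite := by
  intro k hk
  obtain ⟨c, hc⟩ := hclass
  -- key fact: if f ∈ Ω maps some element of H into H, then f '' H = H
  have key : ∀ f ∈ Ω, ∀ a, a ∈ H → f a ∈ H → ⇑f '' H = H := by
    intro f hf a ha hfa
    apply Set.eq_of_subset_of_subset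
    · rintro _ ⟨b, hb, rfl⟩
      rw [hc] at ha hb hfa ⊢
      exact hEq.trans hfa (hinv f hf a b (hEq.trans (hEq.symm ha) hb))
    · intro b hb
      refine ⟨f⁻¹ b, ?_, f.apply_symm_apply b⟩
      rw [hc] at ha hb hfa ⊢
      have h1 : η (f a) b := hEq.trans (hEq.symm hfa) hb
      have h2 : η (f⁻¹ (f a)) (f⁻¹ b) := hinv f⁻¹ (inv_mem hf) _ _ h1
      rw [← Equiv.Perm.mul_apply, inv_mul_cancel, Equiv.Perm.one_apply] at h2
      exact hEq.trans ha h2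
  have i0 : Fin k := ⟨0, hk⟩
  have main : {S : Set (Fin k → G) | ∃ x : Fin k → G, (∀ i, x i ∈ H) ∧
          S = {y | ∃ f ∈ Ω, ⇑f '' H = H ∧ y = ⇑f ∘ x}}
        = {S : Set (Fin k → G) | S.Nonempty ∧ ∃ x : Fin k → G,
            S = {y | ∃ f ∈ Ω, y = ⇑f ∘ x} ∩ {y | ∀ i, y i ∈ H}} := by
    ext S
    constructor
    · rintro ⟨x, hx, rfl⟩
      constructor
      · exact ⟨x, 1, Ω.one_mem, by simp, by simp⟩
      · refine ⟨x, ?_⟩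
        ext y
        constructor
        · rintro ⟨f, hf, hfH, rfl⟩
          exact ⟨⟨f, hf, rfl⟩, fun i => hfH ▸ ⟨x i, hx i, rfl⟩⟩
        · rintro ⟨⟨f, hf, rfl⟩, hy⟩
          exact ⟨f, hf, key f hf (x i0) (hx i0) (hy i0), rfl⟩
    · rintro ⟨hne, x, rfl⟩
      obtain ⟨y, ⟨f, hf, rfl⟩, hyH⟩ := hne
      refine ⟨⇑f ∘ x, hyH, ?_⟩
      ext z
      constructor
      · rintro ⟨⟨g, hg, rfl⟩, hz⟩
        refine ⟨g * f⁻¹, mul_mem hg (inv_mem hf), ?_, ?_⟩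
        · apply key _ (mul_mem hg (inv_mem hf)) (f (x i0)) (hyH i0)
          have : (g * f⁻¹) (f (x i0)) = g (x i0) := by
            simp [Equiv.Perm.mul_apply]
          rw [this]
          exact hz i0
        · funext i
          simp [Equiv.Perm.mul_apply]
      · rintro ⟨h, hh, hhH, rfl⟩
        refine ⟨⟨h * f, mul_mem hh hf, ?_⟩, fun i => hhH ▸ ⟨f (x i), hyH i, rfl⟩⟩
        funext i
        simp [Equiv.Perm.mul_apply]
  refine ⟨main, ?_⟩
  rw [main]
  have hsub : {S : Set (Fin k → G) | S.Nonempty ∧ ∃ x : Fin k → G,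
            S = {y | ∃ f ∈ Ω, y = ⇑f ∘ x} ∩ {y | ∀ i, y i ∈ H}} ⊆
      (fun O => O ∩ {y | ∀ i, y i ∈ H}) ''
        {O : Set (Fin k → G) | ∃ x : Fin k → G, O = {y | ∃ f ∈ Ω, y = ⇑f ∘ x}} := by
    rintro S ⟨-, x, rfl⟩
    exact ⟨_, ⟨x, rfl⟩, rfl⟩
  exact (((holig k).image _).subset hsub)
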